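/- Let S be a semigroup, b, c ∈ S¹, ρ a congruence on S. Then S_{cb}/ρ_{b,c} is isomorphic to bSc / (ρ ∩ (bSc × bSc)), via the map sending the ρ_{b,c}-class of x to the class of bxc. -/

import Mathlib

/-- Any product `x * ↑s * y` in `S¹ = WithOne S` with middle factor in `S` lies in `S`. -/
theorem exists_coe_eq {S : Type*} [Semigroup S] (x y : WithOne S) (s : S) :
    ∃ z : S, (z : WithOne S) = x * ↑s * y := by
  induction x using WithOne.recOneCoe with
  | one => induction y using WithOne.recOneCoe with
    | one => exact ⟨s, by simp⟩
    | coe b => exact ⟨s * b, by simp⟩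
  | coe a => induction y using WithOne.recOneCoe with
    | one => exact ⟨a * s, by simp⟩
    | coe b => exact ⟨a * s * b, by simp [mul_assoc]⟩

/-- The element `x s y ∈ S` for `x, y ∈ S¹`, `s ∈ S`. -/
noncomputable def sand3 {S : Type*} [Semigroup S] (x : WithOne S) (s : S) (y : WithOne S) : S :=
  (exists_coe_eq x y s).choose

theorem sand3_spec {S : Type*} [Semigroup S] (x : WithOne S) (s : S) (y : WithOne S) :
    (↑(sand3 x s y) : WithOne S) = x * ↑s * y :=
  (exists_coe_eq x y s).choose_spec

/-- `sand b c s = b s c ∈ S` for `b, c ∈ S¹`, `s ∈ S`. -/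
noncomputable def sand {S : Type*} [Semigroup S] (b c : WithOne S) (s : S) : S := sand3 b s c

/-- The subsemigroup `bSc = {bsc : s ∈ S}` of `S`. -/
def BSC {S : Type*} [Semigroup S] (b c : WithOne S) : Type _ :=
  {z : S // ∃ s : S, z = sand b c s}

/-- Multiplication on `bSc` (it is closed under the multiplication of `S`). -/
noncomputable def bscMul {S : Type*} [Semigroup S] {b c : WithOne S} (x y : BSC b c) :
    BSC b c :=
  ⟨x.1 * y.1, by
    obtain ⟨s, hs⟩ := x.2
    obtain ⟨t, ht⟩ := y.2
    refine ⟨sand3 (↑s * c * b) t 1, ?_⟩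
    have : ((x.1 * y.1 : S) : WithOne S) = ↑(sand b c (sand3 (↑s * c * b) t 1)) := by
      rw [hs, ht]
      simp only [sand, WithOne.coe_mul, sand3_spec, mul_one, mul_assoc]
    exact_mod_cast this⟩

/-- `S_{cb}/ρ_{b,c}` is isomorphic to `bSc / (ρ ∩ (bSc × bSc))`, via the map sending the
`ρ_{b,c}`-class of `x` to the class of `bxc`; the map is multiplicative from the variant
multiplication `s ∗ t = s (cb) t` to the multiplication of `bSc`. -/
theorem variant_quotient_iso {S : Type*} [Semigroup S]
    (b c : WithOne S) (ρ : S → S → Prop) (hequiv : Equivalence ρ)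
    (hcomp : ∀ s t u v : S, ρ s t → ρ u v → ρ (s * u) (t * v)) :
    ∃ e : Quot (fun s t : S => ρ (sand b c s) (sand b c t)) ≃
        Quot (fun x y : BSC b c => ρ x.1 y.1),
      (∀ s : S, e (Quot.mk _ s) = Quot.mk _ ⟨sand b c s, s, rfl⟩) ∧
      (∀ s t : S, e (Quot.mk _ (sand3 (↑s * (c * b)) t 1)) =
          Quot.mk _ (bscMul ⟨sand b c s, s, rfl⟩ ⟨sand b c t, t, rfl⟩)) := by
  classical
  refine ⟨⟨Quot.lift (fun s => Quot.mk _ (⟨sand b c s, s, rfl⟩ : BSC b c))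
      (fun s t h => Quot.sound h),
    Quot.lift (fun x : BSC b c => Quot.mk _ x.2.choose) (fun x y h => Quot.sound (by
      show ρ (sand b c x.2.choose) (sand b c y.2.choose)
      rw [← x.2.choose_spec, ← y.2.choose_spec]; exact h)), ?_, ?_⟩,
    fun s => rfl, fun s t => ?_⟩
  · intro q
    induction q using Quot.ind with | _ s => ?_
    show Quot.mk _ (⟨sand b c s, s, rfl⟩ : BSC b c).2.choose = Quot.mk _ s
    refine Quot.sound ?_
    show ρ (sand b c (⟨sand b c s, s, rfl⟩ : BSC b c).2.choose) (sand b c s)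
    rw [← (⟨sand b c s, s, rfl⟩ : BSC b c).2.choose_spec]
    exact hequiv.refl _
  · intro q
    induction q using Quot.ind with | _ x => ?_
    show Quot.mk _ (⟨sand b c x.2.choose, x.2.choose, rfl⟩ : BSC b c) = Quot.mk _ x
    congr 1
    exact Subtype.ext x.2.choose_spec.symm
  · show Quot.mk _ (⟨sand b c (sand3 (↑s * (c * b)) t 1), _, rfl⟩ : BSC b c) =
      Quot.mk _ (bscMul ⟨sand b c s, s, rfl⟩ ⟨sand b c t, t, rfl⟩)
    congr 1
    refine Subtype.ext ?_
    show sand b c (sand3 (↑s * (c * b)) t 1) = sand b c s * sand b c t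
    have : (↑(sand b c (sand3 (↑s * (c * b)) t 1)) : WithOne S) =
        ↑(sand b c s * sand b c t) := by
      simp only [sand, WithOne.coe_mul, sand3_spec, mul_one, mul_assoc]
    exact_mod_cast this
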